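/- Fix real constants c > 0 and b > 0. Define, for any map t : {1,2,…} → ℕ, U_c(t) = ∑_{k=1}^∞ 4^{−k}·exp(−t_k·c) and L_b(t) = (1/4)·∑_{k=1}^∞ 4^{−k}·exp(−t_k·b). For each n ≥ 1 let t^{(n)} be a transmission policy of length n (∑_{k≥1} t^{(n)}_k = n) that is efficient for c (U_c(t^{(n)}) ≤ U_c(t') for every transmission policy t' of length n). Then liminf_{n→∞} ln( L_b(t^{(n)}) ) / √n ≥ −√(2·c·ln 4). -/

import Mathlib

/-- Upper bound on the end-to-end distortion of a transmission pattern `t : {1,2,…} → ℕ`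
(indexed here by `k ↦ t (k+1)`): `U_c(t) = ∑_{k≥1} 4^{−k} exp(−t_k c)`. -/
noncomputable def distortionUB (c : ℝ) (t : ℕ → ℕ) : ℝ :=
  ∑' k : ℕ, (4 : ℝ)⁻¹ ^ (k + 1) * Real.exp (-(t (k + 1) : ℝ) * c)

/-- Lower bound on the end-to-end distortion of a transmission pattern `t : {1,2,…} → ℕ`:
`L_b(t) = (1/4) ∑_{k≥1} 4^{−k} exp(−t_k b)`. -/
noncomputable def distortionLB (b : ℝ) (t : ℕ → ℕ) : ℝ :=
  (1 / 4) * ∑' k : ℕ, (4 : ℝ)⁻¹ ^ (k + 1) * Real.exp (-(t (k + 1) : ℝ) * b)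

/-- A transmission policy of length `n`: `∑_{k≥1} t_k = n`. -/
def IsPolicy (n : ℕ) (t : ℕ → ℕ) : Prop :=
  (∑' k : ℕ, (t (k + 1) : ENNReal)) = n

/-- A policy of length `n` is efficient for `c` if it minimizes `U_c` among all policies
of length `n`. -/
def IsEfficient (c : ℝ) (n : ℕ) (t : ℕ → ℕ) : Prop :=
  IsPolicy n t ∧ ∀ t' : ℕ → ℕ, IsPolicy n t' → distortionUB c t ≤ distortionUB c t'

open Filter Real

private lemma summable_aux (c : ℝ) (hc : 0 < c) (s : ℕ → ℕ) :
    Summable (fun k : ℕ => (4 : ℝ)⁻¹ ^ (k + 1) * Real.exp (-(s k : ℝ) * c)) := by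
  refine Summable.of_nonneg_of_le (fun k => by positivity) (fun k => ?_)
    (summable_geometric_of_lt_one (r := (4 : ℝ)⁻¹) (by norm_num) (by norm_num))
  have h1 : Real.exp (-(s k : ℝ) * c) ≤ 1 := by
    rw [Real.exp_le_one_iff]
    have : (0:ℝ) ≤ (s k : ℝ) * c := by positivity
    linarith [this]
  calc (4 : ℝ)⁻¹ ^ (k + 1) * Real.exp (-(s k : ℝ) * c)
      ≤ (4 : ℝ)⁻¹ ^ (k + 1) * 1 :=
        mul_le_mul_of_nonneg_left h1 (by positivity)
    _ = (4 : ℝ)⁻¹ ^ (k + 1) := mul_one _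
    _ ≤ (4 : ℝ)⁻¹ ^ k := pow_le_pow_of_le_one (by norm_num) (by norm_num) (Nat.le_succ k)

set_option maxHeartbeats 1000000 in
/-- Key structural consequences of efficiency. -/
private lemma key_lemma (c b : ℝ) (hc : 0 < c) (hb : 0 < b) (n : ℕ) (hn : 1 ≤ n)
    (t : ℕ → ℕ) (ht : IsEfficient c n t) :
    ∃ m : ℕ, (m : ℝ) ^ 2 * Real.log 4 ≤ 2 * n * c ∧
      (4 : ℝ)⁻¹ ^ (m + 3) ≤ distortionLB b t := by
  set s : ℕ → ℕ := fun k => t (k + 1) with hs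
  have hpol : (∑' k : ℕ, (s k : ENNReal)) = n := ht.1
  -- finset sums are bounded by n
  have hle : ∀ F : Finset ℕ, (∑ k ∈ F, s k) ≤ n := by
    intro F
    have h1 : (∑ k ∈ F, (s k : ENNReal)) ≤ ∑' k : ℕ, (s k : ENNReal) :=
      ENNReal.sum_le_tsum F
    rw [hpol] at h1
    have h2 : ((∑ k ∈ F, s k : ℕ) : ENNReal) ≤ (n : ENNReal) := by
      push_cast
      exact h1
    exact_mod_cast h2
  -- support is finite
  have hfin : (Function.support s).Finite := by
    by_contra h
    obtain ⟨F, hFsub, hFcard⟩ :=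
      Set.Infinite.exists_subset_card_eq h (n + 1)
    have : (n + 1) ≤ ∑ k ∈ F, s k := by
      calc (n + 1) = ∑ _k ∈ F, 1 := by rw [Finset.sum_const, hFcard]; ring
        _ ≤ ∑ k ∈ F, s k := by
          refine Finset.sum_le_sum (fun k hk => ?_)
          have : s k ≠ 0 := hFsub hk
          omega
    have := hle F
    omega
  -- support is nonempty
  have hne : ∃ k, s k ≠ 0 := by
    by_contra h
    push_neg at h
    have h0 : ((n : ℕ) : ENNReal) = 0 := by
      rw [← hpol]; simp [h]
    have : n = 0 := by exact_mod_cast h0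
    omega
  -- the maximal supported index
  set F : Finset ℕ := hfin.toFinset with hF
  have hFne : F.Nonempty := by
    obtain ⟨k, hk⟩ := hne
    exact ⟨k, by simp [hF, Function.mem_support, hk]⟩
  set m : ℕ := F.max' hFne with hm
  have hsm : s m ≠ 0 := by
    have := F.max'_mem hFne
    simpa [hF, Function.mem_support] using this
  have hmax : ∀ k, m < k → s k = 0 := by
    intro k hk
    by_contra h
    have hkF : k ∈ F := by simpa [hF, Function.mem_support] using h
    exact absurd (F.le_max' k hkF) (by omega)
  -- per-index lower bound from efficiency
  have hkey : ∀ j, j < m → ((m : ℝ) - j) * Real.log 4 ≤ (s j : ℝ) * c := by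
    intro j hj
    have hjm : j ≠ m := by omega
    -- the perturbed policy
    set s' : ℕ → ℕ := Function.update (Function.update s j (s j + 1)) m (s m - 1) with hs'
    have hs'j : s' j = s j + 1 := by
      simp [hs', Function.update, hjm]
    have hs'm : s' m = s m - 1 := by simp [hs']
    have hs'k : ∀ k, k ≠ j → k ≠ m → s' k = s k := by
      intro k hkj hkm
      simp [hs', Function.update, hkj, hkm]
    set t' : ℕ → ℕ := fun k => s' (k - 1) with ht'
    have ht'eq : ∀ k, t' (k + 1) = s' k := by intro k; simp [ht']
    have hpol' : IsPolicy n t' := by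
      unfold IsPolicy
      have heach : ∀ k : ℕ, (s' k : ENNReal) + (if k = m then 1 else 0)
          = (s k : ENNReal) + (if k = j then 1 else 0) := by
        intro k
        rcases eq_or_ne k j with rfl | hkj
        · rw [hs'j, if_neg hjm, if_pos rfl, add_zero]
          push_cast; ring
        · rcases eq_or_ne k m with rfl | hkm
          · rw [hs'm, if_pos rfl, if_neg hkj, add_zero]
            have h1 : s m - 1 + 1 = s m := by omega
            exact_mod_cast congrArg (Nat.cast : ℕ → ENNReal) h1
          · simp [hs'k k hkj hkm, hkj, hkm]
      have hsum : (∑' k : ℕ, ((s' k : ENNReal) + (if k = m then 1 else 0)))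
          = ∑' k : ℕ, ((s k : ENNReal) + (if k = j then 1 else 0)) := by
        exact tsum_congr heach
      rw [ENNReal.tsum_add, ENNReal.tsum_add, tsum_ite_eq, tsum_ite_eq, hpol] at hsum
      have heq : ∀ k, t' (k + 1) = s' k := ht'eq
      have : (∑' k : ℕ, (s' k : ENNReal)) = n :=
        WithTop.add_right_cancel (by simp : (1 : ENNReal) ≠ ⊤) hsum
      calc (∑' k : ℕ, (t' (k + 1) : ENNReal)) = ∑' k : ℕ, (s' k : ENNReal) := by
            exact tsum_congr (fun k => by rw [heq])
        _ = n := this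
    -- efficiency comparison
    have hU := ht.2 t' hpol'
    set f : ℕ → ℝ := fun k => (4 : ℝ)⁻¹ ^ (k + 1) * Real.exp (-(s k : ℝ) * c) with hf
    set f' : ℕ → ℝ := fun k => (4 : ℝ)⁻¹ ^ (k + 1) * Real.exp (-(s' k : ℝ) * c) with hf'
    have hsumf : Summable f := summable_aux c hc s
    have hsumf' : Summable f' := summable_aux c hc s'
    have hUt : distortionUB c t = ∑' k, f k := rfl
    have hUt' : distortionUB c t' = ∑' k, f' k := by
      unfold distortionUB
      exact tsum_congr (fun k => by rw [ht'eq])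
    have hdiff : (0:ℝ) ≤ ∑' k, (f' k - f k) := by
      rw [Summable.tsum_sub hsumf' hsumf]
      rw [hUt, hUt'] at hU
      linarith
    have hsupp : ∀ k ∉ ({j, m} : Finset ℕ), f' k - f k = 0 := by
      intro k hk
      simp only [Finset.mem_insert, Finset.mem_singleton] at hk
      push_neg at hk
      simp [hf, hf', hs'k k hk.1 hk.2]
    rw [tsum_eq_sum hsupp, Finset.sum_pair hjm] at hdiff
    -- unfold the two terms
    have hsm1 : 1 ≤ s m := by omega
    have hcast : ((s m - 1 : ℕ) : ℝ) = (s m : ℝ) - 1 := by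
      push_cast [Nat.cast_sub hsm1]; ring
    set x : ℝ := Real.exp (-c) with hx
    have hxpos : 0 < x := Real.exp_pos _
    have hx1 : x < 1 := by
      rw [hx, Real.exp_lt_one_iff]; linarith
    have hfj' : f' j = f j * x := by
      show (4 : ℝ)⁻¹ ^ (j + 1) * Real.exp (-(s' j : ℝ) * c)
          = (4 : ℝ)⁻¹ ^ (j + 1) * Real.exp (-(s j : ℝ) * c) * x
      rw [hs'j, hx, mul_assoc, ← Real.exp_add]
      congr 2
      push_cast
      ring
    have hfm' : f' m = f m * x⁻¹ := by
      show (4 : ℝ)⁻¹ ^ (m + 1) * Real.exp (-(s' m : ℝ) * c)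
          = (4 : ℝ)⁻¹ ^ (m + 1) * Real.exp (-(s m : ℝ) * c) * x⁻¹
      rw [hs'm, hx, ← Real.exp_neg, mul_assoc, ← Real.exp_add]
      congr 2
      rw [hcast]
      ring
    -- from 0 ≤ (f' j - f j) + (f' m - f m) :
    have hineq : f j * (1 - x) ≤ f m * (x⁻¹ - 1) := by
      rw [hfj', hfm'] at hdiff
      nlinarith [hdiff]
    -- f m ≤ (4⁻¹)^(m+1) * x  (since s m ≥ 1)
    have hfm_le : f m ≤ (4 : ℝ)⁻¹ ^ (m + 1) * x := by
      simp only [hf, hx]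
      have : Real.exp (-(s m : ℝ) * c) ≤ Real.exp (-c) := by
        apply Real.exp_le_exp.mpr
        have : (1:ℝ) ≤ (s m : ℝ) := by exact_mod_cast hsm1
        nlinarith
      have hp : (0:ℝ) ≤ (4 : ℝ)⁻¹ ^ (m + 1) := by positivity
      exact mul_le_mul_of_nonneg_left this hp
    -- conclude  f j ≤ (4⁻¹)^(m+1)
    have hxinv : x * x⁻¹ = 1 := mul_inv_cancel₀ (ne_of_gt hxpos)
    have hxi : (0:ℝ) < x⁻¹ := inv_pos.mpr hxpos
    have hxinv1 : (1:ℝ) ≤ x⁻¹ := by nlinarith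
    have hfj_le : f j ≤ (4 : ℝ)⁻¹ ^ (m + 1) := by
      have hp : (0:ℝ) ≤ (4 : ℝ)⁻¹ ^ (m + 1) := by positivity
      have h1 : f m * (x⁻¹ - 1) ≤ (4 : ℝ)⁻¹ ^ (m + 1) * x * (x⁻¹ - 1) :=
        mul_le_mul_of_nonneg_right hfm_le (by linarith)
      have h2 : (4 : ℝ)⁻¹ ^ (m + 1) * x * (x⁻¹ - 1) = (4 : ℝ)⁻¹ ^ (m + 1) * (1 - x) := by
        linear_combination ((4 : ℝ)⁻¹ ^ (m + 1)) * hxinv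
      have h3 : f j * (1 - x) ≤ (4 : ℝ)⁻¹ ^ (m + 1) * (1 - x) := by
        rw [← h2]; linarith
      have h4 : (0:ℝ) < 1 - x := by linarith
      exact le_of_mul_le_mul_right h3 h4
    -- take logarithms
    have hexp_le : Real.exp (-(s j : ℝ) * c) ≤ (4 : ℝ)⁻¹ ^ (m - j) := by
      have hpow : (4 : ℝ)⁻¹ ^ (j + 1) * (4 : ℝ)⁻¹ ^ (m - j) = (4 : ℝ)⁻¹ ^ (m + 1) := by
        rw [← pow_add]
        congr 1
        omega
      have hp : (0:ℝ) < (4 : ℝ)⁻¹ ^ (j + 1) := by positivity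
      have : (4 : ℝ)⁻¹ ^ (j + 1) * Real.exp (-(s j : ℝ) * c)
          ≤ (4 : ℝ)⁻¹ ^ (j + 1) * (4 : ℝ)⁻¹ ^ (m - j) := by
        rw [hpow]; exact hfj_le
      exact le_of_mul_le_mul_left this hp
    have hlog : -(s j : ℝ) * c ≤ -(((m : ℝ) - j) * Real.log 4) := by
      have h1 : Real.log (Real.exp (-(s j : ℝ) * c)) ≤ Real.log ((4 : ℝ)⁻¹ ^ (m - j)) :=
        Real.log_le_log (Real.exp_pos _) hexp_le
      rw [Real.log_exp, Real.log_pow, Real.log_inv] at h1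
      have hmj : ((m - j : ℕ) : ℝ) = (m : ℝ) - j := by
        push_cast [Nat.cast_sub hj.le]; ring
      rw [hmj] at h1
      linarith
    linarith
  -- summing the per-index bounds
  have hsum_bound : (m : ℝ) ^ 2 * Real.log 4 ≤ 2 * n * c := by
    have h1 : ∑ j ∈ Finset.range m, ((m : ℝ) - j) * Real.log 4
        ≤ ∑ j ∈ Finset.range m, (s j : ℝ) * c := by
      refine Finset.sum_le_sum (fun j hj => hkey j (Finset.mem_range.mp hj))
    have h2 : (∑ j ∈ Finset.range m, (s j : ℝ)) ≤ (n : ℝ) := by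
      exact_mod_cast hle (Finset.range m)
    have h3 : ∑ j ∈ Finset.range m, ((m : ℝ) - j)
        = (m : ℝ) * m - ∑ j ∈ Finset.range m, (j : ℝ) := by
      rw [Finset.sum_sub_distrib, Finset.sum_const, Finset.card_range]
      push_cast
      ring
    have h4 : (∑ j ∈ Finset.range m, (j : ℝ)) * 2 ≤ (m : ℝ) * m := by
      have := Finset.sum_range_id_mul_two m
      have h5 : ((∑ j ∈ Finset.range m, j) * 2 : ℕ) ≤ m * m := by
        rw [this]
        exact Nat.mul_le_mul_left m (Nat.sub_le m 1)
      calc (∑ j ∈ Finset.range m, (j : ℝ)) * 2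
          = (((∑ j ∈ Finset.range m, j) * 2 : ℕ) : ℝ) := by push_cast; ring
        _ ≤ (m : ℝ) * m := by exact_mod_cast h5
    have hlog4 : (0:ℝ) < Real.log 4 := Real.log_pos (by norm_num)
    have h6 : (m : ℝ) ^ 2 / 2 * Real.log 4
        ≤ (∑ j ∈ Finset.range m, ((m : ℝ) - j)) * Real.log 4 := by
      have : (m : ℝ) ^ 2 / 2 ≤ ∑ j ∈ Finset.range m, ((m : ℝ) - j) := by
        rw [h3]; nlinarith
      nlinarith
    have h7 : (∑ j ∈ Finset.range m, ((m : ℝ) - j)) * Real.log 4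
        = ∑ j ∈ Finset.range m, ((m : ℝ) - j) * Real.log 4 := by
      rw [Finset.sum_mul]
    have h8 : ∑ j ∈ Finset.range m, (s j : ℝ) * c
        = (∑ j ∈ Finset.range m, (s j : ℝ)) * c := by
      rw [Finset.sum_mul]
    have h9 : (∑ j ∈ Finset.range m, (s j : ℝ)) * c ≤ (n : ℝ) * c := by
      nlinarith
    nlinarith
  refine ⟨m, hsum_bound, ?_⟩
  -- lower bound on distortionLB
  have hsm1 : s (m + 1) = 0 := hmax (m + 1) (by omega)
  set g : ℕ → ℝ := fun k => (4 : ℝ)⁻¹ ^ (k + 1) * Real.exp (-(s k : ℝ) * b) with hg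
  have hsumg : Summable g := summable_aux b hb s
  have hterm : g (m + 1) = (4 : ℝ)⁻¹ ^ (m + 2) := by
    simp [hg, hsm1]
  have h1 : g (m + 1) ≤ ∑' k, g k :=
    Summable.le_tsum hsumg (m + 1) (fun j _ => by positivity)
  have hLB : distortionLB b t = (1 / 4) * ∑' k, g k := rfl
  rw [hLB]
  rw [hterm] at h1
  calc (4 : ℝ)⁻¹ ^ (m + 3) = (1 / 4) * (4 : ℝ)⁻¹ ^ (m + 2) := by
        rw [pow_succ]; ring
    _ ≤ (1 / 4) * ∑' k, g k := by linarith

/-- Theorem 2 of the paper: along any sequence of efficient policies `t^{(n)}`,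
`liminf_{n→∞} ln(L_b(t^{(n)})) / √n ≥ −√(2 c ln 4)`. -/
theorem stmt_12 (c b : ℝ) (hc : 0 < c) (hb : 0 < b)
    (t : ℕ → ℕ → ℕ) (heff : ∀ n : ℕ, 1 ≤ n → IsEfficient c n (t n)) :
    Filter.liminf (fun n : ℕ => Real.log (distortionLB b (t n)) / Real.sqrt n)
        Filter.atTop
      ≥ -Real.sqrt (2 * c * Real.log 4) := by
  set K : ℝ := Real.sqrt (2 * c * Real.log 4) with hK
  set u : ℕ → ℝ := fun n => Real.log (distortionLB b (t n)) / Real.sqrt n with hu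
  have hlog4 : (0:ℝ) < Real.log 4 := Real.log_pos (by norm_num)
  -- pointwise lower bound on u for n ≥ 1
  have hlb : ∀ n : ℕ, 1 ≤ n → -K - 3 * Real.log 4 / Real.sqrt n ≤ u n := by
    intro n hn
    obtain ⟨m, hm1, hm2⟩ := key_lemma c b hc hb n hn (t n) (heff n hn)
    have hsqrtn : (0:ℝ) < Real.sqrt n := by
      apply Real.sqrt_pos.mpr
      exact_mod_cast hn
    have hLpos : (0:ℝ) < distortionLB b (t n) := by
      calc (0:ℝ) < (4 : ℝ)⁻¹ ^ (m + 3) := by positivity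
        _ ≤ _ := hm2
    -- log lower bound
    have hlogL : -(((m : ℝ) + 3) * Real.log 4) ≤ Real.log (distortionLB b (t n)) := by
      have h1 : Real.log ((4 : ℝ)⁻¹ ^ (m + 3)) ≤ Real.log (distortionLB b (t n)) :=
        Real.log_le_log (by positivity) hm2
      rw [Real.log_pow, Real.log_inv] at h1
      have : ((m + 3 : ℕ) : ℝ) = (m : ℝ) + 3 := by push_cast; ring
      rw [this] at h1
      linarith
    -- bound on m
    have hmbound : (m : ℝ) ≤ Real.sqrt (2 * n * c / Real.log 4) := by
      rw [Real.le_sqrt (by positivity) (by positivity)]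
      rw [le_div_iff₀ hlog4]
      exact hm1
    -- √(2nc/log4) * log4 = √n * K
    have hsq : Real.sqrt (2 * n * c / Real.log 4) * Real.log 4 = Real.sqrt n * K := by
      rw [hK]
      rw [← Real.sqrt_mul_self hlog4.le]
      rw [← Real.sqrt_mul (by positivity), ← Real.sqrt_mul (by positivity)]
      congr 1
      field_simp
      ring_nf
      rw [Real.sq_sqrt (by positivity)]
    have hstep : -(Real.sqrt n * K + 3 * Real.log 4) ≤ Real.log (distortionLB b (t n)) := by
      have : ((m : ℝ) + 3) * Real.log 4 ≤ Real.sqrt n * K + 3 * Real.log 4 := by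
        have := mul_le_mul_of_nonneg_right hmbound hlog4.le
        rw [hsq] at this
        nlinarith
      linarith
    -- divide by √n
    have hgoal : -K - 3 * Real.log 4 / Real.sqrt n
        ≤ Real.log (distortionLB b (t n)) / Real.sqrt n := by
      rw [le_div_iff₀ hsqrtn]
      calc (-K - 3 * Real.log 4 / Real.sqrt n) * Real.sqrt n
          = -(Real.sqrt n * K + 3 * Real.log 4) := by field_simp; ring
        _ ≤ Real.log (distortionLB b (t n)) := hstep
    exact hgoal
  -- u is eventually bounded above by 0
  have hub : ∀ n : ℕ, 1 ≤ n → u n ≤ 0 := by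
    intro n hn
    have hsqrtn : (0:ℝ) < Real.sqrt n := by
      apply Real.sqrt_pos.mpr
      exact_mod_cast hn
    have hL1 : distortionLB b (t n) ≤ 1 := by
      unfold distortionLB
      have h1 : ∑' k : ℕ, (4 : ℝ)⁻¹ ^ (k + 1) * Real.exp (-(t n (k + 1) : ℝ) * b)
          ≤ ∑' k : ℕ, (4 : ℝ)⁻¹ ^ k := by
        refine Summable.tsum_le_tsum (fun k => ?_) (summable_aux b hb (fun k => t n (k + 1)))
          (summable_geometric_of_lt_one (by norm_num) (by norm_num))
        have h1 : Real.exp (-(t n (k + 1) : ℝ) * b) ≤ 1 := by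
          rw [Real.exp_le_one_iff]
          have : (0:ℝ) ≤ (t n (k + 1) : ℝ) * b := by positivity
          linarith
        calc (4 : ℝ)⁻¹ ^ (k + 1) * Real.exp (-(t n (k + 1) : ℝ) * b)
            ≤ (4 : ℝ)⁻¹ ^ (k + 1) * 1 :=
              mul_le_mul_of_nonneg_left h1 (by positivity)
          _ = (4 : ℝ)⁻¹ ^ (k + 1) := mul_one _
          _ ≤ (4 : ℝ)⁻¹ ^ k := pow_le_pow_of_le_one (by norm_num) (by norm_num) (Nat.le_succ k)
      have h2 : ∑' k : ℕ, ((4 : ℝ)⁻¹) ^ k = (1 - 4⁻¹)⁻¹ :=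
        tsum_geometric_of_lt_one (by norm_num) (by norm_num)
      rw [h2] at h1
      nlinarith
    have hlogle : Real.log (distortionLB b (t n)) ≤ 0 :=
      Real.log_nonpos (le_of_lt (by
        obtain ⟨m, _, hm2⟩ := key_lemma c b hc hb n hn (t n) (heff n hn)
        calc (0:ℝ) < (4 : ℝ)⁻¹ ^ (m + 3) := by positivity
          _ ≤ _ := hm2)) hL1
    exact div_nonpos_of_nonpos_of_nonneg hlogle hsqrtn.le
  -- the comparison sequence tends to -K
  have htend : Tendsto (fun n : ℕ => -K - 3 * Real.log 4 / Real.sqrt n) atTop (nhds (-K)) := by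
    have h1 : Tendsto (fun n : ℕ => ((n : ℝ))⁻¹) atTop (nhds 0) :=
      tendsto_inv_atTop_nhds_zero_nat
    have h2 : Tendsto (fun n : ℕ => (Real.sqrt n)⁻¹) atTop (nhds 0) := by
      have := (Real.continuous_sqrt.tendsto 0).comp h1
      simpa [Function.comp_def, Real.sqrt_inv] using this
    have h3 : Tendsto (fun n : ℕ => 3 * Real.log 4 / Real.sqrt n) atTop (nhds 0) := by
      have h4 : (fun n : ℕ => 3 * Real.log 4 / Real.sqrt n)
          = fun n : ℕ => 3 * Real.log 4 * (Real.sqrt n)⁻¹ := by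
        funext n
        rw [div_eq_mul_inv]
      rw [h4]
      have := h2.const_mul (3 * Real.log 4)
      simpa using this
    have := h3.const_sub (-K)
    simpa using this
  -- conclude via liminf comparison
  have hco : Filter.IsCoboundedUnder (· ≥ ·) atTop u :=
    Filter.isCoboundedUnder_ge_of_eventually_le atTop
      (eventually_atTop.mpr ⟨1, fun n hn => hub n hn⟩)
  have hbd : Filter.IsBoundedUnder (· ≥ ·) atTop
      (fun n : ℕ => -K - 3 * Real.log 4 / Real.sqrt n) :=
    htend.isBoundedUnder_ge
  have hmono : Filter.liminf (fun n : ℕ => -K - 3 * Real.log 4 / Real.sqrt n) atTop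
      ≤ Filter.liminf u atTop := by
    refine Filter.liminf_le_liminf ?_ hbd hco
    exact eventually_atTop.mpr ⟨1, fun n hn => hlb n hn⟩
  rw [htend.liminf_eq] at hmono
  exact hmono
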